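/- Let AVG, OPT = m·AVG be non-negative reals, m a positive integer, and 0 < β < 1. Suppose a₁ ≤ a₂ ≤ ⋯ ≤ a_m are non-negative reals summing to OPT, and let t < m/g ≤ t + 1 for a real g > 1 be such that a_i ≤ (1 − β)AVG for i ≤ t and a_i > (1 − β)AVG for i > t. Then for any index h with t < h ≤ m/s, where 1 < s < g, it holds that a_h ≤ (1 + (β(g − s) + s)/(g(s − 1)))·AVG. -/

import Mathlib

theorem stmt13 (m : ℕ) (hm : 1 ≤ m) (AVG OPT : ℝ) (hAVG : 0 ≤ AVG)
    (hOPT : OPT = m * AVG) (β g s : ℝ) (hβ0 : 0 < β) (hβ1 : β < 1)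
    (hs : 1 < s) (hsg : s < g)
    (a : ℕ → ℝ) (hnn : ∀ i, 0 ≤ a i) (hmono : ∀ i j, i ≤ j → a i ≤ a j)
    (hsum : ∑ i ∈ Finset.Icc 1 m, a i = OPT)
    (t : ℕ) (ht1 : (t : ℝ) < m / g) (ht2 : (m : ℝ) / g ≤ t + 1)
    (hsmall : ∀ i, 1 ≤ i → i ≤ t → a i ≤ (1 - β) * AVG)
    (hbig : ∀ i, t < i → i ≤ m → (1 - β) * AVG < a i)
    (h : ℕ) (hh1 : t < h) (hh2 : (h : ℝ) ≤ m / s) :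
    a h ≤ (1 + (β * (g - s) + s) / (g * (s - 1))) * AVG := by
  have hg1 : (1:ℝ) < g := hs.trans hsg
  have hg0 : (0:ℝ) < g := by linarith
  have hs0 : (0:ℝ) < s := by linarith
  have hh1' : 1 ≤ h := by omega
  have hhs : (h:ℝ) * s ≤ m := by
    rw [← le_div_iff₀ hs0]; exact hh2
  have htg : (t:ℝ) * g < m := by
    have := ht1; rw [lt_div_iff₀ hg0] at this; exact this
  have hhm : h < m := by
    have hc : (1:ℝ) ≤ (h:ℝ) := by exact_mod_cast hh1'
    have : (h:ℝ) < m := by nlinarith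
    exact_mod_cast this
  -- split the sum
  have hsplit1 : ∑ i ∈ Finset.Ioc 0 t, a i + ∑ i ∈ Finset.Ioc t (h-1), a i
      = ∑ i ∈ Finset.Ioc 0 (h-1), a i :=
    Finset.sum_Ioc_consecutive _ (Nat.zero_le t) (by omega)
  have hsplit2 : ∑ i ∈ Finset.Ioc 0 (h-1), a i + ∑ i ∈ Finset.Ioc (h-1) m, a i
      = ∑ i ∈ Finset.Ioc 0 m, a i :=
    Finset.sum_Ioc_consecutive _ (by omega) (by omega)
  have hicc : Finset.Icc 1 m = Finset.Ioc 0 m := rfl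
  have h1 : (0:ℝ) ≤ ∑ i ∈ Finset.Ioc 0 t, a i :=
    Finset.sum_nonneg fun i _ => hnn i
  have h2 : ((h-1-t : ℕ) : ℝ) * ((1 - β) * AVG) ≤ ∑ i ∈ Finset.Ioc t (h-1), a i := by
    have := Finset.card_nsmul_le_sum (Finset.Ioc t (h-1)) a ((1-β)*AVG)
      (fun i hi => by
        simp only [Finset.mem_Ioc] at hi
        exact le_of_lt (hbig i hi.1 (by omega)))
    rwa [Nat.card_Ioc, nsmul_eq_mul] at this
  have h3 : ((m-h+1 : ℕ) : ℝ) * a h ≤ ∑ i ∈ Finset.Ioc (h-1) m, a i := by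
    have := Finset.card_nsmul_le_sum (Finset.Ioc (h-1) m) a (a h)
      (fun i hi => by
        simp only [Finset.mem_Ioc] at hi
        exact hmono h i (by omega))
    rw [Nat.card_Ioc, nsmul_eq_mul] at this
    have hcard : m - (h-1) = m - h + 1 := by omega
    rwa [hcard] at this
  have hc1 : ((h-1-t : ℕ) : ℝ) = (h:ℝ) - 1 - t := by
    have : h - 1 - t = h - (1 + t) := by omega
    rw [this]
    push_cast [Nat.cast_sub (by omega : 1 + t ≤ h)]
    ring
  have hc2 : ((m-h+1 : ℕ) : ℝ) = (m:ℝ) - h + 1 := by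
    push_cast [Nat.cast_sub (by omega : h ≤ m)]
    ring
  have key : ((h:ℝ) - 1 - t) * ((1 - β) * AVG) + ((m:ℝ) - h + 1) * a h ≤ m * AVG := by
    rw [← hc1, ← hc2]
    rw [hicc, ← hsplit2, ← hsplit1] at hsum
    linarith [hsum, hOPT]
  -- final algebra
  have hD : (0:ℝ) < g * (s - 1) := mul_pos hg0 (by linarith)
  have hrw : (1 + (β * (g - s) + s) / (g * (s - 1))) * AVG
      = ((g * (s - 1) + (β * (g - s) + s)) * AVG) / (g * (s - 1)) := by
    field_simp [(by linarith : (0:ℝ) < s - 1).ne']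
  rw [hrw, le_div_iff₀ hD]
  have hu : (0:ℝ) ≤ (m:ℝ) - h * s := by linarith
  have hv : (0:ℝ) ≤ (m:ℝ) - t * g := by linarith
  have hP : (0:ℝ) ≤ ((m:ℝ) - h + 1) * (g * (s - 1) + (β * (g - s) + s))
      - ((m:ℝ) - ((h:ℝ) - 1 - t) * (1 - β)) * (g * (s - 1)) := by
    have hid : ((m:ℝ) - h + 1) * (g * (s - 1) + (β * (g - s) + s))
        - ((m:ℝ) - ((h:ℝ) - 1 - t) * (1 - β)) * (g * (s - 1))
        = β * g * (s - 1) + (β * (g - s) + s) + (β * g + 1 - β) * ((m:ℝ) - h * s)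
          + (1 - β) * (s - 1) * ((m:ℝ) - t * g) := by ring
    rw [hid]
    have e1 : (0:ℝ) ≤ β * g * (s - 1) :=
      mul_nonneg (mul_nonneg hβ0.le hg0.le) (by linarith)
    have e2 : (0:ℝ) ≤ β * (g - s) + s := by
      have := mul_nonneg hβ0.le (show (0:ℝ) ≤ g - s by linarith); linarith
    have e3 : (0:ℝ) ≤ (β * g + 1 - β) * ((m:ℝ) - h * s) :=
      mul_nonneg (by have := mul_nonneg hβ0.le hg0.le; linarith) hu
    have e4 : (0:ℝ) ≤ (1 - β) * (s - 1) * ((m:ℝ) - t * g) :=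
      mul_nonneg (mul_nonneg (by linarith) (by linarith)) hv
    linarith
  have hMH : (1:ℝ) ≤ (m:ℝ) - h + 1 := by
    have : (h:ℝ) ≤ (m:ℝ) := by exact_mod_cast le_of_lt hhm
    linarith
  have hMH0 : (0:ℝ) < (m:ℝ) - h + 1 := by linarith
  have step1 : ((m:ℝ) - h + 1) * (a h * (g * (s - 1)))
      ≤ ((m:ℝ) - h + 1) * ((g * (s - 1) + (β * (g - s) + s)) * AVG) := by
    clear hsum hsplit1 hsplit2 h1 h2 h3 hsmall hbig hnn hmono hicc
    linarith [mul_nonneg hAVG hP, mul_le_mul_of_nonneg_right key (le_of_lt hD)]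
  exact le_of_mul_le_mul_left step1 hMH0
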